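/- Let F : CompHaus^op → Set be a functor satisfying the descent condition: for every continuous surjection f : Y → X of compact Hausdorff spaces, F(X) → F(Y) ⇉ F(Y ×_X Y) is an equalizer. Then for every compact Hausdorff space X, the natural map F(X) → eq( F(B(X)) ⇉ F(B²(X)) ) is a bijection, where B(X) = β|X|, B²(X) = B(B(X) ×_X B(X)), and the two maps are induced by the two composites B²(X) → B(X) ×_X B(X) ⇉ B(X). -/

import Mathlib

open CategoryTheory Limits Opposite

universe u

attribute [local instance] ConcreteCategory.instFunLike

/-- `B(X) = β|X|`: the Stone–Čech compactification of the underlying discrete set of `X`. -/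
noncomputable def B (X : CompHaus.{u}) : CompHaus.{u} := CompHaus.of (Ultrafilter X)

/-- The canonical surjection `ξ_X : B(X) → X` sending an ultrafilter to its limit. -/
noncomputable def xi (X : CompHaus.{u}) : B X ⟶ X :=
  ConcreteCategory.ofHom ⟨Ultrafilter.extend id, continuous_ultrafilter_extend _⟩

/-- The fiber product `B(X) ×_X B(X)` along `ξ_X` (as a set; its `β` is `B²(X)`). -/
def W (X : CompHaus.{u}) : Type u :=
  { p : Ultrafilter X × Ultrafilter X // xi X p.1 = xi X p.2 }

/-- `B²(X) = B(B(X) ×_X B(X))`. -/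
noncomputable def B2 (X : CompHaus.{u}) : CompHaus.{u} := CompHaus.of (Ultrafilter (W X))

/-- The first map `π₁ = p₁ ∘ ξ_{B(X) ×_X B(X)} : B²(X) → B(X)`, i.e. the canonical
continuous extension of the first projection. -/
noncomputable def pi1 (X : CompHaus.{u}) : B2 X ⟶ B X :=
  ConcreteCategory.ofHom ⟨Ultrafilter.extend (fun w : W X => w.1.1), continuous_ultrafilter_extend _⟩

/-- The second map `π₂ = p₂ ∘ ξ_{B(X) ×_X B(X)} : B²(X) → B(X)`. -/
noncomputable def pi2 (X : CompHaus.{u}) : B2 X ⟶ B X :=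
  ConcreteCategory.ofHom ⟨Ultrafilter.extend (fun w : W X => w.1.2), continuous_ultrafilter_extend _⟩

/-- Let `F : CompHaus^op ⥤ Set` satisfy the descent condition: for every
continuous surjection `f : Y → X` of compact Hausdorff spaces, `F(X) → F(Y) ⇉ F(Y ×_X Y)`
is an equalizer. Then for every compact Hausdorff `X`, the natural map
`F(X) → eq( F(B(X)) ⇉ F(B²(X)) )` is a bijection: `F(ξ_X)` is injective with range exactly
the set where the two maps `F(π₁), F(π₂) : F(B(X)) → F(B²(X))` agree. -/
theorem stmt13 (F : CompHaus.{u}ᵒᵖ ⥤ Type u)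
    (hF : ∀ (X Y : CompHaus.{u}) (f : Y ⟶ X), Function.Surjective f →
      Function.Injective (F.map f.op) ∧
      ∀ y : F.obj (op Y),
        (F.map (pullback.fst f f).op y = F.map (pullback.snd f f).op y
          ↔ ∃ x, F.map f.op x = y))
    (X : CompHaus.{u}) :
    Function.Injective (F.map (xi X).op) ∧
    ∀ y : F.obj (op (B X)),
      (F.map (pi1 X).op y = F.map (pi2 X).op y ↔ ∃ x, F.map (xi X).op x = y) := by
  classical
  -- ξ is surjective
  have hxis : Function.Surjective (xi X) := by
    intro x
    exact ⟨(pure x : Ultrafilter X), congrFun (ultrafilter_extend_extends (id : X → X)) x⟩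
  refine ⟨(hF X (B X) (xi X) hxis).1, fun y => ?_⟩
  -- the two composites to X agree
  have hcond : pi1 X ≫ xi X = pi2 X ≫ xi X := by
    have hd : DenseRange (pure : W X → Ultrafilter (W X)) := denseRange_pure
    have hfun : ⇑(pi1 X ≫ xi X) = ⇑(pi2 X ≫ xi X) := by
      apply hd.equalizer (ConcreteCategory.hom (pi1 X ≫ xi X)).continuous (ConcreteCategory.hom (pi2 X ≫ xi X)).continuous
      funext w
      have e1 : (pi1 X) (pure w) = w.1.1 :=
        congrFun (ultrafilter_extend_extends (fun w : W X => w.1.1)) w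
      have e2 : (pi2 X) (pure w) = w.1.2 :=
        congrFun (ultrafilter_extend_extends (fun w : W X => w.1.2)) w
      show (xi X) ((pi1 X) (pure w)) = (xi X) ((pi2 X) (pure w))
      rw [e1, e2]
      exact w.2
    ext u
    exact congrFun hfun u
  -- the comparison map to the categorical pullback
  let g : B2 X ⟶ pullback (xi X) (xi X) := pullback.lift (pi1 X) (pi2 X) hcond
  have hg1 : g ≫ pullback.fst (xi X) (xi X) = pi1 X := pullback.lift_fst _ _ _
  have hg2 : g ≫ pullback.snd (xi X) (xi X) = pi2 X := pullback.lift_snd _ _ _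
  have hfc : ∀ p : (pullback (xi X) (xi X) : CompHaus.{u}),
      ((Concrete.pullbackEquiv (xi X) (xi X)) p).1.1 = pullback.fst (xi X) (xi X) p := by
    intro p
    obtain ⟨u, v, h, rfl⟩ := Concrete.pullbackMk_surjective (xi X) (xi X) p
    simp only [Concrete.pullbackMk, Equiv.apply_symm_apply]
    exact (Concrete.pullbackMk_fst (xi X) (xi X) u v h).symm
  have hsc : ∀ p : (pullback (xi X) (xi X) : CompHaus.{u}),
      ((Concrete.pullbackEquiv (xi X) (xi X)) p).1.2 = pullback.snd (xi X) (xi X) p := by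
    intro p
    obtain ⟨u, v, h, rfl⟩ := Concrete.pullbackMk_surjective (xi X) (xi X) p
    simp only [Concrete.pullbackMk, Equiv.apply_symm_apply]
    exact (Concrete.pullbackMk_snd (xi X) (xi X) u v h).symm
  have pbext : ∀ (p q : (pullback (xi X) (xi X) : CompHaus.{u})),
      pullback.fst (xi X) (xi X) p = pullback.fst (xi X) (xi X) q →
      pullback.snd (xi X) (xi X) p = pullback.snd (xi X) (xi X) q → p = q := by
    intro p q h1 h2
    apply (Concrete.pullbackEquiv (xi X) (xi X)).injective
    apply Subtype.ext
    apply Prod.ext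
    · rw [hfc, hfc, h1]
    · rw [hsc, hsc, h2]
  have hgs : Function.Surjective g := by
    intro p
    obtain ⟨u, v, h, rfl⟩ := Concrete.pullbackMk_surjective (xi X) (xi X) p
    refine ⟨(pure (⟨(u, v), h⟩ : W X) : Ultrafilter (W X)), ?_⟩
    apply pbext
    · have := ConcreteCategory.congr_hom hg1 (pure (⟨(u, v), h⟩ : W X) : Ultrafilter (W X))
      change (ConcreteCategory.hom (pullback.fst (xi X) (xi X))) ((ConcreteCategory.hom g) _) = _ at this
      rw [this, Concrete.pullbackMk_fst]
      exact congrFun (ultrafilter_extend_extends (fun w : W X => w.1.1)) _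
    · have := ConcreteCategory.congr_hom hg2 (pure (⟨(u, v), h⟩ : W X) : Ultrafilter (W X))
      change (ConcreteCategory.hom (pullback.snd (xi X) (xi X))) ((ConcreteCategory.hom g) _) = _ at this
      rw [this, Concrete.pullbackMk_snd]
      exact congrFun (ultrafilter_extend_extends (fun w : W X => w.1.2)) _
  have hinj : Function.Injective (F.map g.op) :=
    (hF (pullback (xi X) (xi X)) (B2 X) g hgs).1
  have e1 : F.map (pi1 X).op y = F.map g.op (F.map (pullback.fst (xi X) (xi X)).op y) := by
    rw [← hg1]; simp [op_comp, FunctorToTypes.map_comp_apply]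
  have e2 : F.map (pi2 X).op y = F.map g.op (F.map (pullback.snd (xi X) (xi X)).op y) := by
    rw [← hg2]; simp [op_comp, FunctorToTypes.map_comp_apply]
  rw [e1, e2, hinj.eq_iff]
  exact (hF X (B X) (xi X) hxis).2 y
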